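/- (Theorem XI made explicit on ball indicator functions, δ = 0) Let n ≥ 0 be an integer. Then: (i) for every integer j with −n ≤ j ≤ n, Q_n(1_{B_j}) = 1_{B_j} pointwise; (ii) for every integer j > n, Q_n(1_{B_j}) = 1_{B_n} pointwise; (iii) for every integer j < −n, Q_n(1_{B_j}) = p^{n+j} · 1_{B_{−n}} pointwise. -/

import Mathlib

open MeasureTheory Complex

/-- Fourier transform on `ℚ_[p]` with respect to the additive character `ψ`
and the Haar measure `μ`: `𝓕φ(x) = ∫ φ(y)·ψ(−x·y) dμ(y)`. -/
noncomputable def fourierT (p : ℕ) [Fact p.Prime] [MeasurableSpace ℚ_[p]]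
    (μ : Measure ℚ_[p]) (ψ : ℚ_[p] → ℂ) (φ : ℚ_[p] → ℂ) : ℚ_[p] → ℂ :=
  fun x => ∫ y, φ y * ψ (-(x * y)) ∂μ

/-- Inverse Fourier transform: `𝓕⁻¹φ(x) = ∫ φ(y)·ψ(x·y) dμ(y)`. -/
noncomputable def fourierInvT (p : ℕ) [Fact p.Prime] [MeasurableSpace ℚ_[p]]
    (μ : Measure ℚ_[p]) (ψ : ℚ_[p] → ℂ) (φ : ℚ_[p] → ℂ) : ℚ_[p] → ℂ :=
  fun x => ∫ y, φ y * ψ (x * y) ∂μ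

/-- A Schwartz–Bruhat function on `ℚ_[p]`: locally constant with compact support. -/
def IsSchwartzBruhat {p : ℕ} [Fact p.Prime] (φ : ℚ_[p] → ℂ) : Prop :=
  IsLocallyConstant φ ∧ HasCompactSupport φ

/-- The indicator function of the ball `B_j = {x : ‖x‖ ≤ p^j}`. -/
noncomputable def ballInd (p : ℕ) [Fact p.Prime] (j : ℤ) : ℚ_[p] → ℂ :=
  Set.indicator {x : ℚ_[p] | ‖x‖ ≤ (p : ℝ) ^ j} (fun _ => (1 : ℂ))

/-- The operator `Q_n = P̃_n P_n` where `P_n` is multiplication by `1_{B_n}`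
and `P̃_n = 𝓕 P_n 𝓕⁻¹`: `Q_nφ = 𝓕(1_{B_n} · 𝓕⁻¹(1_{B_n} · φ))`. -/
noncomputable def Qop (p : ℕ) [Fact p.Prime] [MeasurableSpace ℚ_[p]]
    (μ : Measure ℚ_[p]) (ψ : ℚ_[p] → ℂ) (n : ℕ) (φ : ℚ_[p] → ℂ) : ℚ_[p] → ℂ :=
  fourierT p μ ψ (fun x => ballInd p n x *
    fourierInvT p μ ψ (fun y => ballInd p n y * φ y) x)


open scoped ENNReal

section Aux
variable {p : ℕ} [Fact p.Prime]

lemma digit_exists (z : ℚ_[p]) (hz : ‖z‖ ≤ 1) :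
    ∃ i : ℕ, i < p ∧ ‖z - (i : ℚ_[p])‖ ≤ (p : ℝ)⁻¹ := by
  set w : ℤ_[p] := ⟨z, hz⟩ with hw
  refine ⟨w.appr 1, by simpa using w.appr_lt 1, ?_⟩
  have hs := PadicInt.appr_spec 1 w
  rw [Ideal.mem_span_singleton] at hs
  obtain ⟨u, hu⟩ := hs
  have h1 : ‖w - (w.appr 1 : ℤ_[p])‖ ≤ (p : ℝ)⁻¹ := by
    rw [hu]
    calc ‖(p : ℤ_[p]) ^ 1 * u‖ = ‖(p : ℤ_[p])‖ * ‖u‖ := by rw [pow_one, norm_mul]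
    _ ≤ (p : ℝ)⁻¹ * 1 := by
        apply mul_le_mul (le_of_eq (PadicInt.norm_p)) u.norm_le_one (norm_nonneg _)
          (by positivity)
    _ = (p : ℝ)⁻¹ := mul_one _
  have h2 : ((w - (w.appr 1 : ℤ_[p]) : ℤ_[p]) : ℚ_[p]) = z - (w.appr 1 : ℚ_[p]) := by
    push_cast [hw]
    rfl
  rw [← PadicInt.padic_norm_e_of_padicInt, h2] at h1
  exact h1

lemma pQ_ne : ((p : ℚ_[p])) ≠ 0 := by
  exact_mod_cast (Nat.cast_ne_zero (R := ℚ_[p])).2 (Fact.out : p.Prime).ne_zero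

lemma pR_pos : (0:ℝ) < p := by exact_mod_cast (Fact.out : p.Prime).pos

lemma pR_one_lt : (1:ℝ) < p := by exact_mod_cast (Fact.out : p.Prime).one_lt

lemma norm_pzpow (k : ℤ) : ‖((p:ℚ_[p]) ^ k)‖ = (p:ℝ) ^ (-k) := by
  rw [norm_zpow, Padic.norm_p, inv_zpow, ← zpow_neg]

lemma measurableSet_ballS [MeasurableSpace ℚ_[p]] [BorelSpace ℚ_[p]] (j : ℤ) :
    MeasurableSet {x : ℚ_[p] | ‖x‖ ≤ (p:ℝ)^j} :=
  (isClosed_le (continuous_norm) continuous_const).measurableSet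

lemma meas_ball_step [MeasurableSpace ℚ_[p]] [BorelSpace ℚ_[p]]
    (μ : Measure ℚ_[p]) [μ.IsAddHaarMeasure] (j : ℤ) :
    μ {x : ℚ_[p] | ‖x‖ ≤ (p:ℝ)^(j+1)} = p * μ {x : ℚ_[p] | ‖x‖ ≤ (p:ℝ)^j} := by
  set S : ℤ → Set ℚ_[p] := fun m => {x : ℚ_[p] | ‖x‖ ≤ (p:ℝ)^m} with hS
  set a : ℕ → ℚ_[p] := fun i => (i : ℚ_[p]) * (p:ℚ_[p]) ^ (-(j+1)) with ha
  have hnorm_a : ∀ i : ℕ, i < p → ‖a i‖ ≤ (p:ℝ)^(j+1) := by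
    intro i _
    rw [ha]
    simp only [norm_mul, norm_pzpow, neg_neg]
    calc ‖((i:ℤ) : ℚ_[p])‖ * (p:ℝ)^(j+1) ≤ 1 * (p:ℝ)^(j+1) := by
          apply mul_le_mul_of_nonneg_right (Padic.norm_int_le_one _) (by positivity)
      _ = (p:ℝ)^(j+1) := one_mul _
  have hcover : S (j+1) = ⋃ i ∈ Finset.range p, (fun x => x + (- a i)) ⁻¹' (S j) := by
    ext x
    simp only [Set.mem_iUnion, Set.mem_preimage, Finset.mem_range, hS, Set.mem_setOf_eq]
    constructor
    · intro hx
      have hz : ‖x * (p:ℚ_[p])^(j+1)‖ ≤ 1 := by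
        rw [norm_mul, norm_pzpow]
        calc ‖x‖ * (p:ℝ)^(-(j+1)) ≤ (p:ℝ)^(j+1) * (p:ℝ)^(-(j+1)) := by
              apply mul_le_mul_of_nonneg_right hx (by positivity)
          _ = 1 := by rw [← zpow_add₀ (ne_of_gt pR_pos), add_neg_cancel, zpow_zero]
      obtain ⟨i, hip, hi⟩ := digit_exists _ hz
      refine ⟨i, hip, ?_⟩
      have hpp : (p:ℚ_[p])^(j+1) * (p:ℚ_[p])^(-(j+1)) = 1 := by
        rw [← zpow_add₀ pQ_ne, add_neg_cancel, zpow_zero]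
      have hrw : x + -a i = (x * (p:ℚ_[p])^(j+1) - (i:ℚ_[p])) * (p:ℚ_[p])^(-(j+1)) := by
        rw [ha, sub_mul, mul_assoc, hpp, mul_one]
        ring
      rw [hrw, norm_mul, norm_pzpow, neg_neg]
      calc ‖x * (p:ℚ_[p])^(j+1) - (i:ℚ_[p])‖ * (p:ℝ)^(j+1)
          ≤ (p:ℝ)⁻¹ * (p:ℝ)^(j+1) := by
            apply mul_le_mul_of_nonneg_right hi (by positivity)
        _ = (p:ℝ)^j := by
            rw [← zpow_neg_one, ← zpow_add₀ (ne_of_gt pR_pos)]; ring_nf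
    · rintro ⟨i, hip, hi⟩
      calc ‖x‖ = ‖(x + -a i) + a i‖ := by ring_nf
        _ ≤ max ‖x + -a i‖ ‖a i‖ := Padic.nonarchimedean _ _
        _ ≤ (p:ℝ)^(j+1) := by
            apply max_le (le_trans hi ?_) (hnorm_a i hip)
            apply zpow_le_zpow_right₀ (le_of_lt pR_one_lt) (by omega)
  have hdisj : (Finset.range p : Set ℕ).Pairwise
      (Function.onFun Disjoint fun i => (fun x => x + (- a i)) ⁻¹' (S j)) := by
    intro i hi i' hi' hne
    simp only [Finset.coe_range, Set.mem_Iio] at hi hi'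
    rw [Function.onFun, Set.disjoint_left]
    intro x hx hx'
    simp only [Set.mem_preimage, hS, Set.mem_setOf_eq] at hx hx'
    have hd : ‖a i - a i'‖ = (p:ℝ)^(j+1) := by
      have h1 : a i - a i' = (((i:ℤ) - (i':ℤ) : ℤ) : ℚ_[p]) * (p:ℚ_[p])^(-(j+1)) := by
        rw [ha]; push_cast; ring
      have h2 : ‖(((i:ℤ) - (i':ℤ) : ℤ) : ℚ_[p])‖ = 1 := by
        refine le_antisymm (Padic.norm_int_le_one _) ?_
        by_contra h
        push_neg at h
        have := (Padic.norm_intCast_lt_one_iff (k := (i:ℤ) - (i':ℤ))).1 h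
        have h0 := Int.eq_zero_of_abs_lt_dvd this (by rw [abs_sub_lt_iff]; omega)
        omega
      rw [h1, norm_mul, h2, one_mul, norm_pzpow, neg_neg]
    have : ‖a i - a i'‖ ≤ (p:ℝ)^j := by
      calc ‖a i - a i'‖ = ‖(x + -a i') + -(x + -a i)‖ := by ring_nf
        _ ≤ max ‖x + -a i'‖ ‖-(x + -a i)‖ := Padic.nonarchimedean _ _
        _ = max ‖x + -a i'‖ ‖x + -a i‖ := by rw [norm_neg]
        _ ≤ (p:ℝ)^j := max_le hx' hx
    rw [hd] at this
    have hlt : (p:ℝ)^j < (p:ℝ)^(j+1) := zpow_lt_zpow_right₀ pR_one_lt (by omega)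
    linarith
  have hmeas : ∀ i ∈ Finset.range p, MeasurableSet ((fun x => x + (- a i)) ⁻¹' (S j)) := by
    intro i _
    exact (measurableSet_ballS j).preimage (measurable_add_const _)
  calc μ (S (j+1)) = ∑ i ∈ Finset.range p, μ ((fun x => x + (- a i)) ⁻¹' (S j)) := by
        rw [hcover]; exact measure_biUnion_finset hdisj hmeas
    _ = ∑ i ∈ Finset.range p, μ (S j) := by
        refine Finset.sum_congr rfl fun i _ => ?_
        exact measure_preimage_add_right μ _ _
    _ = p * μ (S j) := by rw [Finset.sum_const, Finset.card_range, nsmul_eq_mul]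

lemma meas_ball [MeasurableSpace ℚ_[p]] [BorelSpace ℚ_[p]]
    (μ : Measure ℚ_[p]) [μ.IsAddHaarMeasure]
    (hμ : μ {x : ℚ_[p] | ‖x‖ ≤ 1} = 1) (j : ℤ) :
    μ {x : ℚ_[p] | ‖x‖ ≤ (p:ℝ)^j} = ENNReal.ofReal ((p:ℝ)^j) := by
  have hp0 : (p:ℝ≥0∞) ≠ 0 := by
    exact_mod_cast Nat.cast_ne_zero.2 (Fact.out : p.Prime).ne_zero
  have hpt : (p:ℝ≥0∞) ≠ ⊤ := ENNReal.natCast_ne_top p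
  have hofp : (p : ℝ≥0∞) = ENNReal.ofReal (p:ℝ) := by
    rw [ENNReal.ofReal_natCast]
  have base : μ {x : ℚ_[p] | ‖x‖ ≤ (p:ℝ)^(0:ℤ)} = ENNReal.ofReal ((p:ℝ)^(0:ℤ)) := by
    simpa using hμ
  have hmulstep : ∀ k : ℤ, ENNReal.ofReal ((p:ℝ)^(k+1)) = p * ENNReal.ofReal ((p:ℝ)^k) := by
    intro k
    rw [zpow_add₀ (ne_of_gt pR_pos), mul_comm, ENNReal.ofReal_mul (by positivity), zpow_one,
      hofp]
  induction j using Int.induction_on with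
  | zero => exact base
  | succ k ih => rw [meas_ball_step μ k, ih, ← hmulstep]
  | pred k ih =>
      have hstep := meas_ball_step μ (-(k+1))
      have : (-(k:ℤ)-1) + 1 = -(k:ℤ) := by ring
      rw [show (-(k+1:ℤ)) + 1 = -(k:ℤ) by ring, ih, show ((p:ℝ))^(-(k:ℤ))
        = ((p:ℝ))^((-(k:ℤ)-1)+1) by norm_num, hmulstep] at hstep
      have := (ENNReal.mul_right_inj hp0 hpt).1 hstep.symm
      rw [show (-(k:ℤ)-1) = -((k:ℤ)+1) by ring] at this ⊢
      exact this


lemma pC_ne : ((p:ℂ)) ≠ 0 := by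
  exact_mod_cast Nat.cast_ne_zero.2 (Fact.out : p.Prime).ne_zero

lemma ballInd_of_mem {m : ℤ} {y : ℚ_[p]} (h : ‖y‖ ≤ (p:ℝ)^m) : ballInd p m y = 1 := by
  unfold ballInd; exact Set.indicator_of_mem h (fun _ => (1:ℂ))

lemma ballInd_of_not_mem {m : ℤ} {y : ℚ_[p]} (h : ¬ ‖y‖ ≤ (p:ℝ)^m) : ballInd p m y = 0 := by
  unfold ballInd; exact Set.indicator_of_notMem h (fun _ => (1:ℂ))

lemma ballInd_mul (a b : ℤ) (x : ℚ_[p]) :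
    ballInd p a x * ballInd p b x = ballInd p (min a b) x := by
  have hmin : ∀ z : ℚ_[p], ‖z‖ ≤ (p:ℝ)^(min a b) ↔ ‖z‖ ≤ (p:ℝ)^a ∧ ‖z‖ ≤ (p:ℝ)^b := by
    intro z
    have : (p:ℝ)^(min a b) = min ((p:ℝ)^a) ((p:ℝ)^b) := by
      rcases le_total a b with h|h
      · rw [min_eq_left h, min_eq_left (zpow_le_zpow_right₀ (le_of_lt pR_one_lt) h)]
      · rw [min_eq_right h, min_eq_right (zpow_le_zpow_right₀ (le_of_lt pR_one_lt) h)]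
    rw [this, le_min_iff]
  by_cases h1 : ‖x‖ ≤ (p:ℝ)^a <;> by_cases h2 : ‖x‖ ≤ (p:ℝ)^b
  · rw [ballInd_of_mem h1, ballInd_of_mem h2, ballInd_of_mem ((hmin x).2 ⟨h1, h2⟩), one_mul]
  · rw [ballInd_of_not_mem h2, ballInd_of_not_mem (fun hc => h2 ((hmin x).1 hc).2), mul_zero]
  · rw [ballInd_of_not_mem h1, ballInd_of_not_mem (fun hc => h1 ((hmin x).1 hc).1), zero_mul]
  · rw [ballInd_of_not_mem h1, ballInd_of_not_mem (fun hc => h1 ((hmin x).1 hc).1), zero_mul]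

lemma ballInd_neg (m : ℤ) (x : ℚ_[p]) : ballInd p m (-x) = ballInd p m x := by
  by_cases h : ‖x‖ ≤ (p:ℝ)^m
  · rw [ballInd_of_mem h, ballInd_of_mem (by rwa [norm_neg])]
  · rw [ballInd_of_not_mem h, ballInd_of_not_mem (by rwa [norm_neg])]

lemma ballInd_shift {m : ℤ} {y0 : ℚ_[p]} (h : ‖y0‖ ≤ (p:ℝ)^m) (y : ℚ_[p]) :
    ballInd p m (y + y0) = ballInd p m y := by
  have hiff : ‖y + y0‖ ≤ (p:ℝ)^m ↔ ‖y‖ ≤ (p:ℝ)^m := by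
    constructor
    · intro h1
      calc ‖y‖ = ‖(y + y0) + -y0‖ := by ring_nf
        _ ≤ max ‖y + y0‖ ‖-y0‖ := Padic.nonarchimedean _ _
        _ ≤ (p:ℝ)^m := max_le h1 (by rwa [norm_neg])
    · intro h1
      calc ‖y + y0‖ ≤ max ‖y‖ ‖y0‖ := Padic.nonarchimedean _ _
        _ ≤ (p:ℝ)^m := max_le h1 h
  by_cases hy : ‖y‖ ≤ (p:ℝ)^m
  · rw [ballInd_of_mem (hiff.2 hy), ballInd_of_mem hy]
  · rw [ballInd_of_not_mem (fun hc => hy (hiff.1 hc)), ballInd_of_not_mem hy]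

lemma char_int [MeasurableSpace ℚ_[p]] [BorelSpace ℚ_[p]]
    (μ : Measure ℚ_[p]) [μ.IsAddHaarMeasure]
    (hμ : μ {x : ℚ_[p] | ‖x‖ ≤ 1} = 1)
    (ψ : ℚ_[p] → ℂ)
    (hψ_add : ∀ x y : ℚ_[p], ψ (x + y) = ψ x * ψ y)
    (hψ_triv : ∀ x : ℚ_[p], ‖x‖ ≤ 1 → ψ x = 1)
    (hψ_nontriv : ∃ x₀ : ℚ_[p], ‖x₀‖ = (p : ℝ) ∧ ψ x₀ ≠ 1)
    (m : ℤ) (c : ℚ_[p]) :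
    ∫ y, ballInd p m y * ψ (c * y) ∂μ = (p:ℂ)^m * ballInd p (-m) c := by
  by_cases hc : ‖c‖ ≤ (p:ℝ)^(-m)
  · have hint : (fun y => ballInd p m y * ψ (c * y))
        = Set.indicator {x : ℚ_[p] | ‖x‖ ≤ (p:ℝ)^m} (fun _ => (1:ℂ)) := by
      funext y
      by_cases hy : ‖y‖ ≤ (p:ℝ)^m
      · have h1 : ‖c * y‖ ≤ 1 := by
          rw [norm_mul]
          calc ‖c‖ * ‖y‖ ≤ (p:ℝ)^(-m) * (p:ℝ)^m := by
                apply mul_le_mul hc hy (norm_nonneg _) (by positivity)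
            _ = 1 := by rw [← zpow_add₀ (ne_of_gt pR_pos), neg_add_cancel, zpow_zero]
        rw [ballInd_of_mem hy, hψ_triv _ h1, one_mul]
        exact (Set.indicator_of_mem hy (fun _ => (1:ℂ))).symm
      · rw [ballInd_of_not_mem hy, zero_mul]
        exact (Set.indicator_of_notMem hy (fun _ => (1:ℂ))).symm
    rw [hint, integral_indicator_const (1:ℂ) (measurableSet_ballS m),
      measureReal_def, meas_ball μ hμ m, ENNReal.toReal_ofReal (by positivity),
      ballInd_of_mem hc, real_smul, mul_one]
    norm_cast
    rw [ofReal_zpow]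
    norm_num
  · have hc0 : c ≠ 0 := by
      intro h
      apply hc
      rw [h, norm_zero]
      positivity
    obtain ⟨x₀, hx₀n, hx₀⟩ := hψ_nontriv
    set v : ℤ := c.valuation with hv
    have hnc : ‖c‖ = (p:ℝ)^(-v) := Padic.norm_eq_zpow_neg_valuation hc0
    have hvm : v + 1 ≤ m := by
      rw [hnc] at hc
      push_neg at hc
      have := (zpow_lt_zpow_iff_right₀ pR_one_lt).1 hc
      omega
    set y0 : ℚ_[p] := c⁻¹ * x₀ with hy0
    have hy0n : ‖y0‖ ≤ (p:ℝ)^m := by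
      rw [hy0, norm_mul, norm_inv, hnc, hx₀n, ← zpow_neg, neg_neg]
      calc (p:ℝ)^v * (p:ℝ) = (p:ℝ)^(v+1) := by
            rw [zpow_add₀ (ne_of_gt pR_pos), zpow_one]
        _ ≤ (p:ℝ)^m := zpow_le_zpow_right₀ (le_of_lt pR_one_lt) hvm
    have hcy0 : c * y0 = x₀ := by
      rw [hy0, ← mul_assoc, mul_inv_cancel₀ hc0, one_mul]
    have hpt : ∀ y : ℚ_[p], ballInd p m (y + y0) * ψ (c * (y + y0))
        = (ballInd p m y * ψ (c * y)) * ψ x₀ := by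
      intro y
      rw [ballInd_shift hy0n, mul_add, hψ_add, hcy0, mul_assoc]
    have key : (∫ y, ballInd p m y * ψ (c * y) ∂μ)
        = (∫ y, ballInd p m y * ψ (c * y) ∂μ) * ψ x₀ := by
      conv_lhs => rw [← integral_add_right_eq_self (fun y => ballInd p m y * ψ (c * y)) y0]
      simp only [hpt]
      rw [integral_mul_const]
    have hz : (∫ y, ballInd p m y * ψ (c * y) ∂μ) * (ψ x₀ - 1) = 0 := by
      linear_combination -key
    have hI0 : (∫ y, ballInd p m y * ψ (c * y) ∂μ) = 0 := by
      rcases mul_eq_zero.1 hz with h | h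
      · exact h
      · exact absurd (sub_eq_zero.1 h) hx₀
    rw [hI0, ballInd_of_not_mem hc, mul_zero]

lemma Qop_ball [MeasurableSpace ℚ_[p]] [BorelSpace ℚ_[p]]
    (μ : Measure ℚ_[p]) [μ.IsAddHaarMeasure]
    (hμ : μ {x : ℚ_[p] | ‖x‖ ≤ 1} = 1)
    (ψ : ℚ_[p] → ℂ)
    (hψ_add : ∀ x y : ℚ_[p], ψ (x + y) = ψ x * ψ y)
    (hψ_triv : ∀ x : ℚ_[p], ‖x‖ ≤ 1 → ψ x = 1)
    (hψ_nontriv : ∃ x₀ : ℚ_[p], ‖x₀‖ = (p : ℝ) ∧ ψ x₀ ≠ 1)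
    (n : ℕ) (j : ℤ) (x : ℚ_[p]) :
    Qop p μ ψ n (ballInd p j) x
      = (p:ℂ)^(min (n:ℤ) j) * ((p:ℂ)^(min (n:ℤ) (-(min (n:ℤ) j)))
          * ballInd p (-(min (n:ℤ) (-(min (n:ℤ) j)))) x) := by
  set m := min (n:ℤ) j with hm
  set k := min (n:ℤ) (-m) with hk
  have hin : ∀ y : ℚ_[p], (∫ z, (ballInd p (n:ℤ) z * ballInd p j z) * ψ (y * z) ∂μ)
      = (p:ℂ)^m * ballInd p (-m) y := by
    intro y
    simp only [ballInd_mul]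
    exact char_int μ hμ ψ hψ_add hψ_triv hψ_nontriv m y
  have hout : ∀ y : ℚ_[p],
      (ballInd p (n:ℤ) y * ((p:ℂ)^m * ballInd p (-m) y)) * ψ (-(x * y))
      = (p:ℂ)^m * (ballInd p k y * ψ (-x * y)) := by
    intro y
    rw [show -(x*y) = -x * y by ring, hk, ← ballInd_mul]
    ring
  calc Qop p μ ψ n (ballInd p j) x
      = ∫ y, (ballInd p (n:ℤ) y * ∫ z, (ballInd p (n:ℤ) z * ballInd p j z) * ψ (y * z) ∂μ)
          * ψ (-(x * y)) ∂μ := rfl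
    _ = ∫ y, (p:ℂ)^m * (ballInd p k y * ψ (-x * y)) ∂μ := by
        congr 1; funext y; rw [hin y, hout y]
    _ = (p:ℂ)^m * ∫ y, ballInd p k y * ψ (-x * y) ∂μ := integral_const_mul _ _
    _ = (p:ℂ)^m * ((p:ℂ)^k * ballInd p (-k) (-x)) := by
        rw [char_int μ hμ ψ hψ_add hψ_triv hψ_nontriv k (-x)]
    _ = (p:ℂ)^m * ((p:ℂ)^k * ballInd p (-k) x) := by rw [ballInd_neg]

end Aux

/-- Theorem XI on ball indicators (`δ = 0`): `Q_n` fixes `1_{B_j}` for `|j| ≤ n`,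
sends `1_{B_j}` to `1_{B_n}` for `j > n`, and to `p^{n+j}·1_{B_{−n}}` for `j < −n`. -/
theorem Qop_on_ball_indicators (p : ℕ) [Fact p.Prime]
    [MeasurableSpace ℚ_[p]] [BorelSpace ℚ_[p]]
    (μ : Measure ℚ_[p]) [μ.IsAddHaarMeasure]
    (hμ : μ {x : ℚ_[p] | ‖x‖ ≤ 1} = 1)
    (ψ : ℚ_[p] → ℂ) (hψ_cont : Continuous ψ)
    (hψ_add : ∀ x y : ℚ_[p], ψ (x + y) = ψ x * ψ y)
    (hψ_norm : ∀ x : ℚ_[p], ‖ψ x‖ = 1)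
    (hψ_triv : ∀ x : ℚ_[p], ‖x‖ ≤ 1 → ψ x = 1)
    (hψ_nontriv : ∃ x₀ : ℚ_[p], ‖x₀‖ = (p : ℝ) ∧ ψ x₀ ≠ 1)
    (n : ℕ) :
    (∀ j : ℤ, -(n : ℤ) ≤ j → j ≤ (n : ℤ) →
      ∀ x : ℚ_[p], Qop p μ ψ n (ballInd p j) x = ballInd p j x) ∧
    (∀ j : ℤ, (n : ℤ) < j →
      ∀ x : ℚ_[p], Qop p μ ψ n (ballInd p j) x = ballInd p (n : ℤ) x) ∧
    (∀ j : ℤ, j < -(n : ℤ) →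
      ∀ x : ℚ_[p], Qop p μ ψ n (ballInd p j) x
        = (p : ℂ) ^ ((n : ℤ) + j) * ballInd p (-(n : ℤ)) x) := by
  have hQ := Qop_ball μ hμ ψ hψ_add hψ_triv hψ_nontriv n
  refine ⟨?_, ?_, ?_⟩
  · intro j h1 h2 x
    rw [hQ j x, min_eq_right h2, min_eq_right (by omega : -j ≤ (n:ℤ)), neg_neg,
      ← mul_assoc, ← zpow_add₀ pC_ne, add_neg_cancel, zpow_zero, one_mul]
  · intro j h x
    rw [hQ j x, min_eq_left (le_of_lt h), min_eq_right (by omega : -(n:ℤ) ≤ (n:ℤ)), neg_neg,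
      ← mul_assoc, ← zpow_add₀ pC_ne, add_neg_cancel, zpow_zero, one_mul]
  · intro j h x
    rw [hQ j x, min_eq_right (by omega : j ≤ (n:ℤ))]
    rw [min_eq_left (by omega : (n:ℤ) ≤ -j), ← mul_assoc, ← zpow_add₀ pC_ne, add_comm j (n:ℤ)]
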